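/- Let m and k be positive integers and let δ ∈ {1,…,2^m−2} satisfy β(δ) ≤ k, where β(δ) denotes the number of maximal blocks of consecutive 1's in the binary representation of δ. Then gcd(δ, 2^m − 1) ≤ 2^{(1 − 1/(2k))·m} − 1, where the right-hand side is interpreted as a real number (real exponentiation). -/

import Mathlib

noncomputable def oneBlocks (k : ℕ) : ℕ :=
  {i : ℕ | k.testBit i = true ∧ k.testBit (i + 1) = false}.ncard

namespace OneBlocksAux

lemma rot_testBit {m ε u : ℕ} (hε : ε < 2 ^ m) (hu : u ≤ m) (j : ℕ) (hj : j < m) :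
    (2 ^ (m - u) * (ε % 2 ^ u) + ε / 2 ^ u).testBit j = ε.testBit ((j + u) % m) := by
  set s := m - u with hs
  have hsu : s + u = m := by omega
  have hb : ε / 2 ^ u < 2 ^ s := by
    rw [Nat.div_lt_iff_lt_mul (Nat.two_pow_pos u), ← pow_add, hsu]
    omega
  rw [Nat.testBit_two_pow_mul_add _ hb]
  by_cases hjs : j < s
  · have h1 : (j + u) % m = u + j := by
      rw [Nat.mod_eq_of_lt (by omega)]; omega
    simp only [hjs, if_true, h1]
    rw [← Nat.shiftRight_eq_div_pow, Nat.testBit_shiftRight]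
  · have h1 : (j + u) % m = j - s := by
      rw [Nat.mod_eq_sub_mod (by omega), Nat.mod_eq_of_lt (by omega)]
      omega
    simp only [hjs, if_false, h1, Nat.testBit_mod_two_pow]
    have : j - s < u := by omega
    simp [this]

lemma rot_key {m ε u : ℕ} (hu : u ≤ m) :
    ε * 2 ^ (m - u) + ε / 2 ^ u =
      (2 ^ (m - u) * (ε % 2 ^ u) + ε / 2 ^ u) + (ε / 2 ^ u) * 2 ^ m := by
  have h2m : (2:ℤ) ^ m = 2 ^ (m - u) * 2 ^ u := by rw [← pow_add]; congr 1; omega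
  have h := Nat.div_add_mod ε (2 ^ u)
  zify at h ⊢
  linear_combination (-(2:ℤ) ^ (m - u)) * h - ((ε:ℤ) / 2 ^ u) * h2m

/-- Existence of a constant cyclic run of length `L` in the binary word of `δ`. -/
lemma run_exists (m k δ L : ℕ) (hm : 2 ≤ m) (hk : 0 < k) (hδ1 : 1 ≤ δ) (hδ2 : δ ≤ 2 ^ m - 2)
    (hβ : oneBlocks δ ≤ k) (hcard : 2 * k * (L - 1) < m) :
    ∃ t b, ∀ j < L, δ.testBit ((t + j) % m) = b := by
  haveI : NeZero m := ⟨by omega⟩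
  haveI : Fact (1 < m) := ⟨by omega⟩
  have h2m : 2 ≤ 2 ^ m := by
    calc 2 = 2 ^ 1 := (pow_one 2).symm
    _ ≤ 2 ^ m := Nat.pow_le_pow_right (by norm_num) (by omega)
  have hδlt : δ < 2 ^ m := by omega
  set v : ZMod m → Bool := fun x => δ.testBit x.val with hv
  set D : Finset (ZMod m) :=
    Finset.univ.filter (fun x => v x = true ∧ v (x + 1) = false) with hD
  set A : Finset (ZMod m) :=
    Finset.univ.filter (fun x => v x = false ∧ v (x + 1) = true) with hA
  -- bits above m are false
  have hhigh : ∀ i, m ≤ i → δ.testBit i = false := fun i hi =>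
    Nat.testBit_lt_two_pow (lt_of_lt_of_le hδlt (Nat.pow_le_pow_right (by norm_num) hi))
  -- oneBlocks as a finset card
  have hset : {i : ℕ | δ.testBit i = true ∧ δ.testBit (i + 1) = false} =
      ↑((Finset.range m).filter fun i => δ.testBit i = true ∧ δ.testBit (i + 1) = false) := by
    ext i
    simp only [Finset.coe_filter, Set.mem_setOf_eq, Finset.mem_range]
    constructor
    · rintro ⟨h1, h2⟩
      refine ⟨?_, h1, h2⟩
      by_contra h
      rw [hhigh i (by omega)] at h1
      exact Bool.false_ne_true h1
    · rintro ⟨_, h1, h2⟩; exact ⟨h1, h2⟩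
  have hblocks : oneBlocks δ =
      ((Finset.range m).filter fun i => δ.testBit i = true ∧ δ.testBit (i + 1) = false).card := by
    rw [oneBlocks, hset, Set.ncard_coe_finset]
  -- descents bounded by k
  have hvadd : ∀ x : ZMod m, (x + 1).val = (x.val + 1) % m := by
    intro x
    rw [ZMod.val_add, ZMod.val_one]
  have hDcard : D.card ≤ k := by
    refine le_trans ?_ (hblocks ▸ hβ)
    apply Finset.card_le_card_of_injOn (fun x => x.val)
    · intro x hx
      simp only [hD, Finset.mem_coe, Finset.mem_filter, Finset.mem_univ, true_and] at hx
      simp only [Finset.mem_coe, Finset.mem_filter, Finset.mem_range]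
      refine ⟨ZMod.val_lt x, hx.1, ?_⟩
      have hxv : δ.testBit ((x.val + 1) % m) = false := by
        have h2 := hx.2
        simp only [hv] at h2
        rwa [hvadd x] at h2
      rcases Nat.lt_or_ge (x.val + 1) m with h | h
      · rwa [Nat.mod_eq_of_lt h] at hxv
      · exact hhigh _ h
    · exact (ZMod.val_injective m).injOn
  -- ascents = descents
  have hsum : ∑ x : ZMod m, ((if v (x + 1) then (1:ℤ) else 0) - (if v x then (1:ℤ) else 0)) = 0 := by
    rw [Finset.sum_sub_distrib]
    have : ∑ x : ZMod m, (if v (x + 1) then (1:ℤ) else 0)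
        = ∑ x : ZMod m, (if v x then (1:ℤ) else 0) :=
      Fintype.sum_equiv (Equiv.addRight 1) _ _ (fun x => rfl)
    rw [this, sub_self]
  have hptwise : ∀ x : ZMod m,
      ((if v (x + 1) then (1:ℤ) else 0) - (if v x then (1:ℤ) else 0)) =
      ((if v x = false ∧ v (x + 1) = true then (1:ℤ) else 0) -
        (if v x = true ∧ v (x + 1) = false then (1:ℤ) else 0)) := by
    intro x
    cases hx : v x <;> cases hx1 : v (x + 1) <;> simp [hx, hx1]
  have hAD : (A.card : ℤ) = D.card := by
    have := hsum
    rw [Finset.sum_congr rfl (fun x _ => hptwise x), Finset.sum_sub_distrib,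
      Finset.sum_boole, Finset.sum_boole] at this
    simp only [hA, hD]
    omega
  have hADn : A.card = D.card := by exact_mod_cast hAD
  -- changes
  set Cs : Finset (ZMod m) := Finset.univ.filter (fun x => v x ≠ v (x + 1)) with hCs
  have hCsub : Cs ⊆ A ∪ D := by
    intro x hx
    simp only [hCs, Finset.mem_filter, Finset.mem_univ, true_and] at hx
    simp only [hA, hD, Finset.mem_union, Finset.mem_filter, Finset.mem_univ, true_and]
    cases h1 : v x <;> cases h2 : v (x + 1) <;> simp_all
  have hCcard : Cs.card ≤ 2 * k := by
    calc Cs.card ≤ (A ∪ D).card := Finset.card_le_card hCsub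
    _ ≤ A.card + D.card := Finset.card_union_le _ _
    _ ≤ 2 * k := by omega
  -- nonemptiness of Cs
  have hx1 : ∃ x : ZMod m, v x = true := by
    obtain ⟨i, hi⟩ := Nat.exists_testBit_of_ne_zero (show δ ≠ 0 by omega)
    have him : i < m := by
      by_contra h
      rw [hhigh i (by omega)] at hi
      exact Bool.false_ne_true hi
    exact ⟨(i : ZMod m), by rw [hv]; simpa [ZMod.val_natCast_of_lt him] using hi⟩
  have hx2 : ∃ x : ZMod m, v x = false := by
    by_contra h
    push_neg at h
    have hall : ∀ x : ZMod m, v x = true := fun x => by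
      cases hx : v x
      · exact absurd hx (h x)
      · rfl
    have : δ = 2 ^ m - 1 := by
      apply Nat.eq_of_testBit_eq
      intro i
      rcases Nat.lt_or_ge i m with hi | hi
      · rw [Nat.testBit_two_pow_sub_one]
        have := hall (i : ZMod m)
        rw [hv] at this
        simp only [ZMod.val_natCast_of_lt hi] at this
        simp [this, hi]
      · rw [hhigh i hi, Nat.testBit_two_pow_sub_one]
        simp; omega
    omega
  have hCne : Cs.Nonempty := by
    by_contra h
    rw [Finset.not_nonempty_iff_eq_empty] at h
    have hconst : ∀ x : ZMod m, v x = v (x + 1) := by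
      intro x
      by_contra hne
      have : x ∈ Cs := by simp [hCs, hne]
      simp [h] at this
    have hshift : ∀ (n : ℕ) (x : ZMod m), v (x + (n : ZMod m)) = v x := by
      intro n
      induction n with
      | zero => intro x; simp
      | succ p ih =>
        intro x
        have : x + ((p + 1 : ℕ) : ZMod m) = (x + (p : ℕ)) + 1 := by push_cast; ring
        rw [this, ← hconst (x + (p : ℕ)), ih]
    obtain ⟨y1, hy1⟩ := hx1
    obtain ⟨y2, hy2⟩ := hx2
    have : v y2 = v y1 := by
      have hrw : y1 + (((y2 - y1).val : ℕ) : ZMod m) = y2 := by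
        rw [ZMod.natCast_val, ZMod.cast_id]; ring
      rw [← hrw, hshift]
    rw [hy1, hy2] at this
    exact Bool.false_ne_true this
  obtain ⟨c0, hc0⟩ := hCne
  have hc0' : v c0 ≠ v (c0 + 1) := by
    simpa [hCs] using hc0
  -- marked positions after cutting the circle at c0
  set M : Finset ℕ :=
    (Finset.range m).filter (fun j => v (c0 + (j : ZMod m)) ≠ v (c0 + (j : ZMod m) + 1)) with hM
  have h0M : 0 ∈ M := by
    simp only [hM, Finset.mem_filter, Finset.mem_range]
    exact ⟨by omega, by simpa using hc0'⟩
  have hMcard : M.card ≤ 2 * k := by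
    refine le_trans ?_ hCcard
    apply Finset.card_le_card_of_injOn (fun (j : ℕ) => c0 + (j : ZMod m))
    · intro j hj
      simp only [hM, Finset.mem_coe, Finset.mem_filter, Finset.mem_range] at hj
      simp only [hCs, Finset.mem_coe, Finset.mem_filter, Finset.mem_univ, true_and]
      exact hj.2
    · intro j1 hj1 j2 hj2 heq
      simp only [hM, Finset.coe_filter, Set.mem_setOf_eq, Finset.mem_range] at hj1 hj2
      have : (j1 : ZMod m) = (j2 : ZMod m) := by
        exact add_left_cancel heq
      have := congrArg ZMod.val this
      rwa [ZMod.val_natCast_of_lt hj1.1, ZMod.val_natCast_of_lt hj2.1] at this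
  -- pigeonhole
  have hmaps : ∀ i ∈ Finset.range m, Nat.findGreatest (· ∈ M) i ∈ M := by
    intro i _
    exact Nat.findGreatest_spec (Nat.zero_le i) h0M
  obtain ⟨c, hcM, hfib⟩ :=
    Finset.exists_lt_card_fiber_of_mul_lt_card_of_maps_to hmaps
      (by
        rw [Finset.card_range]
        calc M.card * (L - 1) ≤ 2 * k * (L - 1) := Nat.mul_le_mul_right _ hMcard
        _ < m := hcard)
  set F := (Finset.range m).filter (fun i => Nat.findGreatest (· ∈ M) i = c) with hF
  have hFne : F.Nonempty := Finset.card_pos.mp (by omega)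
  set i0 := F.max' hFne with hi0
  have hi0F : i0 ∈ F := F.max'_mem hFne
  have hi0m : i0 < m := by
    have := hi0F
    simp only [hF, Finset.mem_filter, Finset.mem_range] at this
    exact this.1
  have hi0g : Nat.findGreatest (· ∈ M) i0 = c := by
    have := hi0F
    simp only [hF, Finset.mem_filter, Finset.mem_range] at this
    exact this.2
  have hci0 : c ≤ i0 := hi0g ▸ Nat.findGreatest_le i0
  have hFsub : F ⊆ Finset.Icc c i0 := by
    intro i hi
    simp only [hF, Finset.mem_filter, Finset.mem_range] at hi
    rw [Finset.mem_Icc]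
    exact ⟨hi.2 ▸ Nat.findGreatest_le i, F.le_max' i (by simp [hF, Finset.mem_filter, hi.1, hi.2])⟩
  have hcL : c + L ≤ i0 + 1 := by
    have h1 : F.card ≤ i0 + 1 - c := by
      calc F.card ≤ (Finset.Icc c i0).card := Finset.card_le_card hFsub
      _ = i0 + 1 - c := Nat.card_Icc c i0
    omega
  have hnochange : ∀ j, 1 ≤ j → j + 1 ≤ L →
      v (c0 + ((c + j : ℕ) : ZMod m)) = v (c0 + ((c + j : ℕ) : ZMod m) + 1) := by
    intro j h1 h2
    have hnot : c + j ∉ M := by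
      have h3 : Nat.findGreatest (· ∈ M) i0 < c + j := by rw [hi0g]; omega
      exact Nat.findGreatest_is_greatest h3 (by omega)
    simp only [hM, Finset.mem_filter, Finset.mem_range, not_and] at hnot
    have : ¬(v (c0 + ((c + j : ℕ) : ZMod m)) ≠ v (c0 + ((c + j : ℕ) : ZMod m) + 1)) :=
      hnot (by omega)
    exact not_ne_iff.mp this
  -- build the run
  set x0 : ZMod m := c0 + ((c + 1 : ℕ) : ZMod m) with hx0
  refine ⟨x0.val, v x0, ?_⟩
  have hrun : ∀ j, j < L → v (c0 + ((c + 1 + j : ℕ) : ZMod m)) = v x0 := by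
    intro j
    induction j with
    | zero => intro _; simp [hx0]
    | succ n ih =>
      intro h
      have hn := ih (by omega)
      have heq1 : c0 + ((c + 1 + (n + 1) : ℕ) : ZMod m)
          = c0 + ((c + (n + 1) : ℕ) : ZMod m) + 1 := by push_cast; ring
      have heq2 : c0 + ((c + 1 + n : ℕ) : ZMod m)
          = c0 + ((c + (n + 1) : ℕ) : ZMod m) := by push_cast; ring
      rw [heq1, ← hnochange (n + 1) (by omega) (by omega), ← heq2, hn]
  intro j hj
  have harg : (((x0.val + j : ℕ)) : ZMod m) = c0 + ((c + 1 + j : ℕ) : ZMod m) := by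
    push_cast
    rw [ZMod.natCast_val, ZMod.cast_id, hx0]
    push_cast
    ring
  calc δ.testBit ((x0.val + j) % m)
      = v (((x0.val + j : ℕ)) : ZMod m) := by
        rw [hv]; congr 1; exact (ZMod.val_natCast m _).symm
    _ = v (c0 + ((c + 1 + j : ℕ) : ZMod m)) := by rw [harg]
    _ = v x0 := hrun j hj

lemma rot_lt {m ε u : ℕ} (hε : ε < 2 ^ m) (hu : u ≤ m) :
    2 ^ (m - u) * (ε % 2 ^ u) + ε / 2 ^ u < 2 ^ m := by
  have h1 : ε % 2 ^ u < 2 ^ u := Nat.mod_lt _ (by positivity)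
  have h2 : ε / 2 ^ u < 2 ^ (m - u) := by
    rw [Nat.div_lt_iff_lt_mul (by positivity), ← pow_add]
    rwa [show m - u + u = m by omega]
  have key : 2 ^ (m - u) * (ε % 2 ^ u) + 2 ^ (m - u) ≤ 2 ^ m := by
    have := Nat.mul_le_mul_left (2 ^ (m - u)) (show ε % 2 ^ u + 1 ≤ 2 ^ u by omega)
    rw [mul_add, mul_one, ← pow_add] at this
    rwa [show m - u + u = m by omega] at this
  omega

end OneBlocksAux

theorem gcd_le_rpow_of_oneBlocks_le
    (m k : ℕ) (hm : 0 < m) (hk : 0 < k) (δ : ℕ) (hδ1 : 1 ≤ δ) (hδ2 : δ ≤ 2 ^ m - 2)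
    (hβ : oneBlocks δ ≤ k) :
    (Nat.gcd δ (2 ^ m - 1) : ℝ) ≤
      (2 : ℝ) ^ ((1 - 1 / (2 * (k : ℝ))) * (m : ℝ)) - 1 := by
  have hm2 : 2 ≤ m := by
    rcases Nat.lt_or_ge m 2 with h | h
    · exfalso
      interval_cases m
      rw [pow_one] at hδ2; omega
    · exact h
  have h4m : 4 ≤ 2 ^ m := by
    calc (4:ℕ) = 2 ^ 2 := rfl
    _ ≤ 2 ^ m := Nat.pow_le_pow_right (by norm_num) hm2
  have hδlt : δ < 2 ^ m := by omega
  set d := Nat.gcd δ (2 ^ m - 1) with hd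
  have hdδ : d ∣ δ := Nat.gcd_dvd_left _ _
  have hdn : d ∣ 2 ^ m - 1 := Nat.gcd_dvd_right _ _
  set L := (m + (2 * k - 1)) / (2 * k) with hL
  have h2k : 0 < 2 * k := by omega
  have hdm := Nat.div_add_mod (m + (2 * k - 1)) (2 * k)
  have hmod := Nat.mod_lt (m + (2 * k - 1)) h2k
  rw [← hL] at hdm
  have hL1 : 1 ≤ L := (Nat.one_le_div_iff h2k).mpr (by omega)
  have hLle : m ≤ 2 * k * L := by omega
  have hexp : 2 * k * (L - 1) + 2 * k = 2 * k * L := by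
    obtain ⟨p, hp⟩ := Nat.exists_eq_add_of_le hL1
    rw [hp, show 1 + p - 1 = p by omega]
    ring
  have hcard : 2 * k * (L - 1) < m := by omega
  have hLm : L ≤ m := by
    have := Nat.mul_le_mul_right (L - 1) (show 2 ≤ 2 * k by omega)
    omega
  obtain ⟨t, b, hrun⟩ := OneBlocksAux.run_exists m k δ L hm2 hk hδ1 hδ2 hβ hcard
  set ε := if b then 2 ^ m - 1 - δ else δ with hε
  have hε1 : 1 ≤ ε := by rcases b <;> simp [hε] <;> omega
  have hεlt : ε < 2 ^ m := by rcases b <;> simp [hε] <;> omega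
  have hdε : d ∣ ε := by
    rcases b
    · simpa [hε] using hdδ
    · simpa [hε] using Nat.dvd_sub hdn hdδ
  have hbit : ∀ j < L, ε.testBit ((t + j) % m) = false := by
    intro j hj
    have hlt : (t + j) % m < m := Nat.mod_lt _ (by omega)
    rcases hb : b
    · rw [hε, hb, if_neg (by simp)]
      rw [hrun j hj, hb]
    · have hεeq : ε = 2 ^ m - (δ + 1) := by rw [hε, hb, if_pos rfl]; omega
      rw [hεeq, Nat.testBit_two_pow_sub_succ hδlt]
      rw [hrun j hj, hb]
      simp
  set u := (t + L) % m with hu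
  have hum : u ≤ m := le_of_lt (Nat.mod_lt _ (by omega))
  set ρ := 2 ^ (m - u) * (ε % 2 ^ u) + ε / 2 ^ u with hρ
  have hρbit : ∀ j, m - L ≤ j → j < m → ρ.testBit j = false := by
    intro j h1 h2
    rw [hρ, OneBlocksAux.rot_testBit hεlt hum j h2]
    have harg : (j + u) % m = (t + (j + L - m)) % m := by
      rw [hu, Nat.add_mod_mod, show j + (t + L) = (t + (j + L - m)) + m by omega,
        Nat.add_mod_right]
    rw [harg]
    exact hbit _ (by omega)
  have hρltm : ρ < 2 ^ m := OneBlocksAux.rot_lt hεlt hum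
  have hρlt : ρ < 2 ^ (m - L) := by
    apply Nat.lt_pow_two_of_testBit
    intro i hi
    rcases Nat.lt_or_ge i m with h | h
    · exact hρbit i hi h
    · exact Nat.testBit_lt_two_pow
        (lt_of_lt_of_le hρltm (Nat.pow_le_pow_right (by norm_num) h))
  have hρpos : 0 < ρ := by
    rcases Nat.eq_zero_or_pos ρ with h | h
    · exfalso
      rw [hρ] at h
      have h1 : ε / 2 ^ u = 0 := Nat.eq_zero_of_add_eq_zero_left h
      have h2 : 2 ^ (m - u) * (ε % 2 ^ u) = 0 := Nat.eq_zero_of_add_eq_zero_right h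
      have h3 : ε % 2 ^ u = 0 := by
        rcases Nat.mul_eq_zero.mp h2 with h' | h'
        · exact absurd h' (by positivity)
        · exact h'
      have h4 := Nat.div_add_mod ε (2 ^ u)
      rw [h1, h3, mul_zero] at h4
      omega
    · exact h
  have hdρ : d ∣ ρ := by
    have hkey := OneBlocksAux.rot_key (m := m) (ε := ε) (u := u) hum
    have hρeq : ρ = ε * 2 ^ (m - u) - (ε / 2 ^ u) * (2 ^ m - 1) := by
      have h1 : (ε / 2 ^ u) * (2 ^ m - 1) = (ε / 2 ^ u) * 2 ^ m - ε / 2 ^ u := by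
        rw [Nat.mul_sub, mul_one]
      have h2 : ε / 2 ^ u ≤ (ε / 2 ^ u) * 2 ^ m :=
        Nat.le_mul_of_pos_right _ (by positivity)
      omega
    rw [hρeq]
    exact Nat.dvd_sub (hdε.mul_right _) (hdn.mul_left _)
  have hfinal_nat : d ≤ 2 ^ (m - L) - 1 := by
    have := Nat.le_of_dvd hρpos hdρ
    omega
  have hone : 1 ≤ 2 ^ (m - L) := Nat.one_le_two_pow
  calc (d : ℝ) ≤ ((2 ^ (m - L) - 1 : ℕ) : ℝ) := Nat.cast_le.mpr hfinal_nat
    _ = (2:ℝ) ^ (((m - L : ℕ) : ℕ) : ℝ) - 1 := by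
        rw [Real.rpow_natCast, Nat.cast_sub hone]
        push_cast
        ring
    _ ≤ (2 : ℝ) ^ ((1 - 1 / (2 * (k : ℝ))) * (m : ℝ)) - 1 := by
        have hk' : (0:ℝ) < 2 * (k:ℝ) := by positivity
        have h1 : ((m:ℝ)) ≤ 2 * (k:ℝ) * (L:ℝ) := by exact_mod_cast hLle
        have hexp_le : (((m - L : ℕ) : ℕ) : ℝ) ≤ (1 - 1 / (2 * (k:ℝ))) * (m : ℝ) := by
          rw [Nat.cast_sub hLm, sub_mul, one_mul]
          have h2 : 1 / (2 * (k:ℝ)) * (m:ℝ) ≤ (L:ℝ) := by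
            rw [div_mul_eq_mul_div, one_mul, div_le_iff₀ hk']
            linarith
          linarith
        have := Real.rpow_le_rpow_of_exponent_le (by norm_num : (1:ℝ) ≤ 2) hexp_le
        linarith
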